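/- Main theorem (conversion of CBR-optimality to constrained A-optimality): Let Ξ be a set of designs on 𝒳 and Ξ̃ be the set of extended designs ξ̃ on 𝒳̃ satisfying ξ̃(j,x)=ξ̃(1,x) for all x and j=2,…,s, ξ̃(y)=1 for auxiliary points y, and ξ̃(1,·) ∈ Ξ. Define Φ(ξ) = Σ_j tr((M(ξ)+B_j)⁻¹H_j) when all M(ξ)+B_j are invertible and Φ(ξ)=+∞ otherwise; define Φ_A(ξ̃)=tr(M̃(ξ̃)⁻¹) when M̃(ξ̃) is invertible and +∞ otherwise. If ξ̃* minimizes Φ_A over Ξ̃, then ξ̃*(1,·) minimizes Φ over Ξ. -/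

import Mathlib

open Matrix
open scoped Classical

/-- Regression vectors of the extended artificial model. -/
noncomputable def ftil {p s : ℕ} {X : Type*} (f : X → (Fin p → ℝ))
    (K : Fin s → Matrix (Fin p) (Fin p) ℝ)
    (r : Fin s → ℕ) (u : (j : Fin s) → Fin (r j) → (Fin p → ℝ)) :
    ((Fin s × X) ⊕ (Σ j : Fin s, Fin (r j))) → (Fin p × Fin s → ℝ) :=
  Sum.elim
    (fun jx => fun iq => if iq.2 = jx.1 then ((K jx.1)⁻¹).mulVec (f jx.2) iq.1 else 0)
    (fun y => fun iq => if iq.2 = y.1 then u y.1 y.2 iq.1 else 0)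

/-- Information matrix of a design. -/
def infoM {X : Type*} [Fintype X] {n : Type*} [Fintype n] [DecidableEq n]
    (f : X → (n → ℝ)) (ξ : X → ℝ) : Matrix n n ℝ :=
  ∑ x, ξ x • vecMulVec (f x) (f x)

/-- The compound Bayes risk criterion, with value `⊤` for singular designs. -/
noncomputable def CBRC {p s : ℕ} {X : Type*} [Fintype X] (f : X → (Fin p → ℝ))
    (B H : Fin s → Matrix (Fin p) (Fin p) ℝ) (ξ : X → ℝ) : EReal :=
  if ∀ j, IsUnit (infoM f ξ + B j)
  then ((∑ j, ((infoM f ξ + B j)⁻¹ * H j).trace : ℝ) : EReal)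
  else ⊤

/-- The A-optimality criterion, with value `⊤` for singular designs. -/
noncomputable def PhiA {X : Type*} [Fintype X] {n : Type*} [Fintype n] [DecidableEq n]
    (f : X → (n → ℝ)) (ξ : X → ℝ) : EReal :=
  if IsUnit (infoM f ξ) then (((infoM f ξ)⁻¹.trace : ℝ) : EReal) else ⊤

/-- Block diagonal of inverses is the inverse of the block diagonal. -/
lemma inv_blockDiagonal' {n o : Type*} [Fintype n] [DecidableEq n] [Fintype o] [DecidableEq o]
    (M : o → Matrix n n ℝ) (h : ∀ j, IsUnit (M j)) :
    (blockDiagonal M)⁻¹ = blockDiagonal (fun j => (M j)⁻¹) := by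
  apply Matrix.inv_eq_right_inv
  rw [← blockDiagonal_mul]
  have : (fun j => M j * (M j)⁻¹) = fun _ => (1 : Matrix n n ℝ) := by
    funext j
    exact Matrix.mul_nonsing_inv _ ((Matrix.isUnit_iff_isUnit_det _).mp (h j))
  rw [this]
  exact blockDiagonal_one

lemma blockDiagonal_sum {m o ι R : Type*} [DecidableEq o] [AddCommMonoid R]
    (t : Finset ι) (F : ι → o → Matrix m m R) :
    blockDiagonal (∑ z ∈ t, F z) = ∑ z ∈ t, blockDiagonal (F z) :=
  map_sum (Matrix.blockDiagonalAddMonoidHom m m o R) F t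

lemma mul_vecMulVec_mul {n : Type*} [Fintype n] (A : Matrix n n ℝ) (v w : n → ℝ) :
    A * vecMulVec v w * Aᵀ = vecMulVec (A *ᵥ v) (A *ᵥ w) := by
  rw [vecMulVec_eq Unit, vecMulVec_eq Unit, replicateCol_mulVec]
  have : Matrix.replicateRow Unit (A *ᵥ w) = Matrix.replicateRow Unit w * Aᵀ := by
    rw [← vecMul_transpose, replicateRow_vecMul]
  rw [this]
  simp only [Matrix.mul_assoc]

/-- A rank-one matrix built from a vector supported on one block is a block diagonal
matrix with a single nonzero block. -/
lemma pad_vecMulVec {p s : ℕ} (j₀ : Fin s) (v w : Fin p → ℝ) :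
    vecMulVec (fun iq : Fin p × Fin s => if iq.2 = j₀ then v iq.1 else 0)
      (fun iq : Fin p × Fin s => if iq.2 = j₀ then w iq.1 else 0)
    = blockDiagonal (fun j => if j₀ = j then vecMulVec v w else 0) := by
  ext ⟨i, q⟩ ⟨i', q'⟩
  simp only [vecMulVec_apply, blockDiagonal_apply]
  by_cases h1 : q = j₀ <;> by_cases h2 : q' = j₀
  · subst h1; subst h2; simp [vecMulVec_apply]
  · subst h1
    have : ¬ q = q' := fun h => h2 (h.symm)
    simp [h2, this]
  · subst h2
    have : ¬ q = q' := fun h => h1 h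
    simp [h1, this]
  · have h3 : ¬ j₀ = q := fun h => h1 h.symm
    simp [h1, h2, h3]

/-- Key structural identity: the extended information matrix is block diagonal. -/
lemma infoM_ftil {p s : ℕ} {X : Type*} [Fintype X]
    (f : X → (Fin p → ℝ))
    (B K : Fin s → Matrix (Fin p) (Fin p) ℝ)
    (r : Fin s → ℕ)
    (u : (j : Fin s) → Fin (r j) → (Fin p → ℝ))
    (hu : ∀ j, (K j)⁻¹ * B j * ((K j)ᵀ)⁻¹ = ∑ k, vecMulVec (u j k) (u j k))
    (ξ' : ((Fin s × X) ⊕ (Σ j : Fin s, Fin (r j))) → ℝ) (ξ : X → ℝ)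
    (h1 : ∀ (j : Fin s) (x : X), ξ' (Sum.inl (j, x)) = ξ x)
    (h2 : ∀ y : (Σ j : Fin s, Fin (r j)), ξ' (Sum.inr y) = 1) :
    infoM (ftil f K r u) ξ' =
      blockDiagonal (fun j => (K j)⁻¹ * (infoM f ξ + B j) * ((K j)ᵀ)⁻¹) := by
  -- the two halves of the sum
  have e1 : ∀ jx : Fin s × X,
      ξ' (Sum.inl jx) • vecMulVec (ftil f K r u (Sum.inl jx)) (ftil f K r u (Sum.inl jx))
      = blockDiagonal (fun j => if jx.1 = j then
          ξ jx.2 • vecMulVec ((K jx.1)⁻¹ *ᵥ f jx.2) ((K jx.1)⁻¹ *ᵥ f jx.2) else 0) := by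
    rintro ⟨j₀, x⟩
    rw [h1 j₀ x]
    have hf : ftil f K r u (Sum.inl (j₀, x)) =
        fun iq : Fin p × Fin s => if iq.2 = j₀ then ((K j₀)⁻¹ *ᵥ f x) iq.1 else 0 := rfl
    rw [hf, pad_vecMulVec, ← blockDiagonal_smul]
    have : (ξ x • fun j => if j₀ = j then
        vecMulVec ((K j₀)⁻¹ *ᵥ f x) ((K j₀)⁻¹ *ᵥ f x) else 0)
        = fun j => if j₀ = j then
            ξ x • vecMulVec ((K j₀)⁻¹ *ᵥ f x) ((K j₀)⁻¹ *ᵥ f x) else 0 := by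
      funext j
      simp only [Pi.smul_apply]
      split_ifs <;> simp
    rw [this]
  have e2 : ∀ y : (Σ j : Fin s, Fin (r j)),
      ξ' (Sum.inr y) • vecMulVec (ftil f K r u (Sum.inr y)) (ftil f K r u (Sum.inr y))
      = blockDiagonal (fun j => if y.1 = j then vecMulVec (u y.1 y.2) (u y.1 y.2) else 0) := by
    intro y
    rw [h2 y, one_smul]
    have hf : ftil f K r u (Sum.inr y) =
        fun iq : Fin p × Fin s => if iq.2 = y.1 then u y.1 y.2 iq.1 else 0 := rfl
    rw [hf, pad_vecMulVec]
  rw [infoM, Fintype.sum_sum_type,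
    Finset.sum_congr rfl (fun jx _ => e1 jx), Finset.sum_congr rfl (fun y _ => e2 y),
    ← blockDiagonal_sum, ← blockDiagonal_sum, ← blockDiagonal_add]
  refine congrArg _ ?_
  funext j
  have hA : (∑ jx : Fin s × X, fun j' => if jx.1 = j' then
      ξ jx.2 • vecMulVec ((K jx.1)⁻¹ *ᵥ f jx.2) ((K jx.1)⁻¹ *ᵥ f jx.2) else 0) j
      = (K j)⁻¹ * infoM f ξ * ((K j)ᵀ)⁻¹ := by
    rw [Finset.sum_apply]
    rw [Fintype.sum_prod_type]
    have inner : ∀ j₀ : Fin s,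
        (∑ x : X, (fun j' => if j₀ = j' then
            ξ x • vecMulVec ((K j₀)⁻¹ *ᵥ f x) ((K j₀)⁻¹ *ᵥ f x) else 0) j)
        = if j₀ = j then ∑ x : X, ξ x • vecMulVec ((K j₀)⁻¹ *ᵥ f x) ((K j₀)⁻¹ *ᵥ f x)
          else 0 := by
      intro j₀
      split_ifs with h
      · exact Finset.sum_congr rfl fun x _ => by simp [h]
      · exact Finset.sum_eq_zero fun x _ => by simp [h]
    calc (∑ j₀ : Fin s, ∑ x : X, (fun j' => if j₀ = j' then
            ξ x • vecMulVec ((K j₀)⁻¹ *ᵥ f x) ((K j₀)⁻¹ *ᵥ f x) else 0) j)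
        = ∑ j₀ : Fin s, if j₀ = j then
            ∑ x : X, ξ x • vecMulVec ((K j₀)⁻¹ *ᵥ f x) ((K j₀)⁻¹ *ᵥ f x) else 0 :=
          Finset.sum_congr rfl fun j₀ _ => inner j₀
      _ = ∑ x : X, ξ x • vecMulVec ((K j)⁻¹ *ᵥ f x) ((K j)⁻¹ *ᵥ f x) := by
          rw [Finset.sum_ite_eq' Finset.univ j]
          simp
      _ = (K j)⁻¹ * infoM f ξ * ((K j)ᵀ)⁻¹ := by
          rw [infoM, ← Matrix.transpose_nonsing_inv, Finset.mul_sum, Finset.sum_mul]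
          refine Finset.sum_congr rfl fun x _ => ?_
          rw [Matrix.mul_smul, Matrix.smul_mul, mul_vecMulVec_mul]
  have hB2 : (∑ y : (Σ j : Fin s, Fin (r j)), fun j' => if y.1 = j' then
      vecMulVec (u y.1 y.2) (u y.1 y.2) else 0) j
      = (K j)⁻¹ * B j * ((K j)ᵀ)⁻¹ := by
    rw [Finset.sum_apply, ← Finset.univ_sigma_univ, Finset.sum_sigma]
    have inner : ∀ j₀ : Fin s,
        (∑ k : Fin (r j₀), (fun j' => if j₀ = j' then
            vecMulVec (u j₀ k) (u j₀ k) else 0) j)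
        = if j₀ = j then ∑ k : Fin (r j₀), vecMulVec (u j₀ k) (u j₀ k) else 0 := by
      intro j₀
      split_ifs with h
      · exact Finset.sum_congr rfl fun k _ => by simp [h]
      · exact Finset.sum_eq_zero fun k _ => by simp [h]
    calc (∑ j₀ : Fin s, ∑ k : Fin (r j₀), (fun j' => if j₀ = j' then
            vecMulVec (u j₀ k) (u j₀ k) else 0) j)
        = ∑ j₀ : Fin s, if j₀ = j then
            ∑ k : Fin (r j₀), vecMulVec (u j₀ k) (u j₀ k) else 0 :=
          Finset.sum_congr rfl fun j₀ _ => inner j₀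
      _ = ∑ k : Fin (r j), vecMulVec (u j k) (u j k) := by
          rw [Finset.sum_ite_eq' Finset.univ j]
          simp
      _ = (K j)⁻¹ * B j * ((K j)ᵀ)⁻¹ := (hu j).symm
  rw [Pi.add_apply, hA, hB2, Matrix.mul_add, Matrix.add_mul]

theorem stmt_16 {p s : ℕ} [NeZero s] {X : Type*} [Fintype X]
    (f : X → (Fin p → ℝ))
    (B K H : Fin s → Matrix (Fin p) (Fin p) ℝ)
    (r : Fin s → ℕ)
    (hB : ∀ j, (B j).PosSemidef) (hr : ∀ j, (B j).rank = r j)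
    (hK : ∀ j, IsUnit (K j)) (hH : ∀ j, H j = K j * (K j)ᵀ)
    (u : (j : Fin s) → Fin (r j) → (Fin p → ℝ))
    (hu : ∀ j, (K j)⁻¹ * B j * ((K j)ᵀ)⁻¹ = ∑ k, vecMulVec (u j k) (u j k))
    (Ξ : Set (X → ℝ)) (hΞnn : ∀ ξ ∈ Ξ, ∀ x, 0 ≤ ξ x)
    (Ξtil : Set (((Fin s × X) ⊕ (Σ j : Fin s, Fin (r j))) → ℝ))
    (hΞtil : ∀ ξ', ξ' ∈ Ξtil ↔
      ((∀ (j : Fin s) (x : X), ξ' (Sum.inl (j, x)) = ξ' (Sum.inl (0, x))) ∧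
       (∀ y : (Σ j : Fin s, Fin (r j)), ξ' (Sum.inr y) = 1) ∧
       (fun x => ξ' (Sum.inl (0, x))) ∈ Ξ))
    (ξ'star : ((Fin s × X) ⊕ (Σ j : Fin s, Fin (r j))) → ℝ)
    (hmem : ξ'star ∈ Ξtil)
    (hopt : ∀ ξ' ∈ Ξtil, PhiA (ftil f K r u) ξ'star ≤ PhiA (ftil f K r u) ξ') :
    (fun x => ξ'star (Sum.inl (0, x))) ∈ Ξ ∧
    ∀ ξ ∈ Ξ, CBRC f B H (fun x => ξ'star (Sum.inl (0, x))) ≤ CBRC f B H ξ := by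
  have hKdet : ∀ j, IsUnit (K j).det := fun j => (Matrix.isUnit_iff_isUnit_det _).mp (hK j)
  have hKTdet : ∀ j, IsUnit ((K j)ᵀ).det := by
    intro j; rw [Matrix.det_transpose]; exact hKdet j
  have hKinv : ∀ j, IsUnit ((K j)⁻¹) := by
    intro j; rw [Matrix.isUnit_nonsing_inv_iff]; exact hK j
  have hKTinv : ∀ j, IsUnit (((K j)ᵀ)⁻¹) := by
    intro j
    rw [Matrix.isUnit_nonsing_inv_iff, Matrix.isUnit_iff_isUnit_det]
    exact hKTdet j
  -- Key equality: for an admissible extension, PhiA on the extension equals CBRC on the base.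
  have key : ∀ ξ' (ξ : X → ℝ), (∀ (j : Fin s) (x : X), ξ' (Sum.inl (j, x)) = ξ x) →
      (∀ y : (Σ j : Fin s, Fin (r j)), ξ' (Sum.inr y) = 1) →
      PhiA (ftil f K r u) ξ' = CBRC f B H ξ := by
    intro ξ' ξ h1 h2
    have hM := infoM_ftil f B K r u hu ξ' ξ h1 h2
    have hunit : IsUnit (infoM (ftil f K r u) ξ') ↔ ∀ j, IsUnit (infoM f ξ + B j) := by
      rw [hM, Matrix.isUnit_iff_isUnit_det, Matrix.det_blockDiagonal]
      constructor
      · intro h j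
        have hd : IsUnit (((K j)⁻¹ * (infoM f ξ + B j) * ((K j)ᵀ)⁻¹).det) := by
          rw [← Finset.mul_prod_erase Finset.univ _ (Finset.mem_univ j)] at h
          exact isUnit_of_mul_isUnit_left h
        rw [Matrix.det_mul, Matrix.det_mul] at hd
        rw [Matrix.isUnit_iff_isUnit_det]
        exact isUnit_of_mul_isUnit_right (isUnit_of_mul_isUnit_left hd)
      · intro h
        refine Finset.prod_induction _ IsUnit (fun _ _ => IsUnit.mul) isUnit_one fun j _ => ?_
        rw [Matrix.det_mul, Matrix.det_mul]
        exact (((Matrix.isUnit_iff_isUnit_det _).mp (hKinv j)).mul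
          ((Matrix.isUnit_iff_isUnit_det _).mp (h j))).mul
          ((Matrix.isUnit_iff_isUnit_det _).mp (hKTinv j))
    rw [PhiA, CBRC]
    by_cases hu' : ∀ j, IsUnit (infoM f ξ + B j)
    · rw [if_pos (hunit.mpr hu'), if_pos hu']
      congr 1
      norm_cast
      rw [hM, inv_blockDiagonal' _ (fun j => ((hKinv j).mul (hu' j)).mul (hKTinv j)),
        trace_blockDiagonal]
      refine Finset.sum_congr rfl fun j _ => ?_
      rw [Matrix.mul_inv_rev, Matrix.mul_inv_rev,
        Matrix.nonsing_inv_nonsing_inv _ (hKTdet j),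
        Matrix.nonsing_inv_nonsing_inv _ (hKdet j),
        ← Matrix.mul_assoc, Matrix.trace_mul_cycle, Matrix.trace_mul_comm, ← hH j]
    · rw [if_neg (fun h => hu' (hunit.mp h)), if_neg hu']
  obtain ⟨h1s, h2s, h3s⟩ := (hΞtil ξ'star).mp hmem
  refine ⟨h3s, fun ξ hξ => ?_⟩
  set ξ'' : ((Fin s × X) ⊕ (Σ j : Fin s, Fin (r j))) → ℝ :=
    Sum.elim (fun jx => ξ jx.2) (fun _ => 1) with hξ''
  have hmem'' : ξ'' ∈ Ξtil := by
    rw [hΞtil]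
    exact ⟨fun j x => rfl, fun y => rfl, hξ⟩
  have e1 : PhiA (ftil f K r u) ξ'star = CBRC f B H (fun x => ξ'star (Sum.inl (0, x))) :=
    key ξ'star _ (fun j x => h1s j x) h2s
  have e2 : PhiA (ftil f K r u) ξ'' = CBRC f B H ξ :=
    key ξ'' ξ (fun j x => rfl) (fun y => rfl)
  rw [← e1, ← e2]
  exact hopt ξ'' hmem''
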